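/- The SCoRa MAP estimator is pairwise monotone for comparisons: if two SCoRa datasets D and D' have the same ratings and the same comparisons except that one comparison of the pair (b, c) has value r in D and value r' in D' with r ≥ r', then θ_b*(D) − θ_c*(D) ≥ θ_b*(D') − θ_c*(D'). -/

import Mathlib

open MeasureTheory RealInnerProductSpace

noncomputable section

/-- The cumulant generating function `Φ_μ(θ) = log ∫ exp(θ r) dμ(r)` of a measure `μ` on `ℝ`. -/
def cgfm (μ : Measure ℝ) (θ : ℝ) : ℝ := Real.log (∫ r, Real.exp (θ * r) ∂μ)

/-- `μ` has finite exponential moments: `∫ exp(θ r) dμ(r) < ∞` for every `θ`. -/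
def HasExpMoments (μ : Measure ℝ) : Prop :=
  ∀ θ : ℝ, Integrable (fun r => Real.exp (θ * r)) μ

/-- The SCoRa negative log-posterior `L(β, θ0 | D)` for a dataset consisting of a multiset `C`
of comparisons `(b, c, r)` and a multiset `Rt` of ratings `(a, t)`, with embedding columns
`x a ∈ ℝ^D`, comparison root law `f`, rating root law `g`, and prior variances `sb2 = σ_β²`,
`s02 = σ_0²`. -/
def scoraLoss {Dd A : ℕ} (x : Fin A → EuclideanSpace ℝ (Fin Dd))
    (f g : Measure ℝ) (sb2 s02 : ℝ)
    (C : Multiset (Fin A × Fin A × ℝ)) (Rt : Multiset (Fin A × ℝ))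
    (β : EuclideanSpace ℝ (Fin Dd)) (θ0 : ℝ) : ℝ :=
  ‖β‖ ^ 2 / (2 * sb2) + θ0 ^ 2 / (2 * s02)
    + (C.map (fun q =>
        cgfm f ⟪x q.1 - x q.2.1, β⟫ - q.2.2 * ⟪x q.1 - x q.2.1, β⟫)).sum
    + (Rt.map (fun q =>
        cgfm g (⟪x q.1, β⟫ - θ0) - q.2 * (⟪x q.1, β⟫ - θ0))).sum

lemma mgfm_pos (μ : Measure ℝ) [IsProbabilityMeasure μ] (hμ : HasExpMoments μ) (θ : ℝ) :
    0 < ∫ r, Real.exp (θ * r) ∂μ :=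
  ProbabilityTheory.mgf_pos (hμ θ)

lemma cgfm_midpoint (μ : Measure ℝ) [IsProbabilityMeasure μ] (hμ : HasExpMoments μ) (a b : ℝ) :
    cgfm μ ((a + b) / 2) ≤ (cgfm μ a + cgfm μ b) / 2 := by
  have hmeas : ∀ t : ℝ, AEStronglyMeasurable (fun r => Real.exp (t * r)) μ := fun t =>
    (Real.continuous_exp.comp (continuous_const.mul continuous_id)).aestronglyMeasurable
  have hF : MemLp (fun r => Real.exp ((a / 2) * r)) (ENNReal.ofReal 2) μ := by
    rw [show ENNReal.ofReal 2 = 2 by norm_num]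
    rw [memLp_two_iff_integrable_sq (hmeas _)]
    have : (fun r => Real.exp ((a/2) * r) ^ 2) = fun r => Real.exp (a * r) := by
      funext r; rw [← Real.exp_nat_mul]; ring_nf
    rw [this]; exact hμ a
  have hG : MemLp (fun r => Real.exp ((b / 2) * r)) (ENNReal.ofReal 2) μ := by
    rw [show ENNReal.ofReal 2 = 2 by norm_num]
    rw [memLp_two_iff_integrable_sq (hmeas _)]
    have : (fun r => Real.exp ((b/2) * r) ^ 2) = fun r => Real.exp (b * r) := by
      funext r; rw [← Real.exp_nat_mul]; ring_nf
    rw [this]; exact hμ b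
  have hpq : (2:ℝ).HolderConjugate 2 := by constructor <;> norm_num
  have key := integral_mul_le_Lp_mul_Lq_of_nonneg hpq
    (Filter.Eventually.of_forall fun r => (Real.exp_pos _).le)
    (Filter.Eventually.of_forall fun r => (Real.exp_pos _).le) hF hG
  have h1 : (fun r => Real.exp ((a/2) * r) * Real.exp ((b/2) * r))
      = fun r => Real.exp (((a+b)/2) * r) := by
    funext r; rw [← Real.exp_add]; ring_nf
  have h2 : ∀ t : ℝ, (fun r => Real.exp ((t/2) * r) ^ (2:ℝ)) = fun r => Real.exp (t * r) := by
    intro t; funext r; rw [← Real.exp_mul]; ring_nf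
  rw [show (∫ r, Real.exp ((a/2) * r) * Real.exp ((b/2) * r) ∂μ)
      = ∫ r, Real.exp (((a+b)/2) * r) ∂μ from by rw [← h1]] at key
  have key2 : (∫ r, Real.exp (((a+b)/2) * r) ∂μ)
      ≤ (∫ r, Real.exp (a * r) ∂μ) ^ ((1:ℝ)/2) * (∫ r, Real.exp (b * r) ∂μ) ^ ((1:ℝ)/2) := by
    calc (∫ r, Real.exp (((a+b)/2) * r) ∂μ) ≤ _ := key
    _ = _ := by rw [show (fun r => Real.exp ((a/2) * r) ^ (2:ℝ)) = fun r => Real.exp (a * r) from h2 a,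
        show (fun r => Real.exp ((b/2) * r) ^ (2:ℝ)) = fun r => Real.exp (b * r) from h2 b]
  have ha := mgfm_pos μ hμ a
  have hb := mgfm_pos μ hμ b
  have hm := mgfm_pos μ hμ ((a+b)/2)
  unfold cgfm
  calc Real.log (∫ r, Real.exp ((a+b)/2 * r) ∂μ)
      ≤ Real.log ((∫ r, Real.exp (a * r) ∂μ) ^ ((1:ℝ)/2) * (∫ r, Real.exp (b * r) ∂μ) ^ ((1:ℝ)/2)) :=
        Real.log_le_log hm key2
    _ = (Real.log (∫ r, Real.exp (a * r) ∂μ) + Real.log (∫ r, Real.exp (b * r) ∂μ)) / 2 := by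
        rw [Real.log_mul (by positivity) (by positivity), Real.log_rpow ha, Real.log_rpow hb]; ring

lemma msum_avg {ι : Type*} (s : Multiset ι) (F G : ι → ℝ) :
    (s.map (fun i => (F i + G i) / 2)).sum = ((s.map F).sum + (s.map G).sum) / 2 := by
  induction s using Multiset.induction with
  | empty => simp
  | cons a s ih => simp only [Multiset.map_cons, Multiset.sum_cons, ih]; ring

lemma scoraLoss_cons {Dd A : ℕ} (x : Fin A → EuclideanSpace ℝ (Fin Dd))
    (f g : Measure ℝ) (sb2 s02 : ℝ) (C0 : Multiset (Fin A × Fin A × ℝ))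
    (Rt : Multiset (Fin A × ℝ)) (b c : Fin A) (r : ℝ)
    (β : EuclideanSpace ℝ (Fin Dd)) (θ0 : ℝ) :
    scoraLoss x f g sb2 s02 ((b, c, r) ::ₘ C0) Rt β θ0
      = scoraLoss x f g sb2 s02 C0 Rt β θ0
        + (cgfm f ⟪x b - x c, β⟫ - r * ⟪x b - x c, β⟫) := by
  simp only [scoraLoss, Multiset.map_cons, Multiset.sum_cons]; ring

lemma scoraLoss_midpoint {Dd A : ℕ} (x : Fin A → EuclideanSpace ℝ (Fin Dd))
    (f g : Measure ℝ) [IsProbabilityMeasure f] [IsProbabilityMeasure g]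
    (hf : HasExpMoments f) (hg : HasExpMoments g)
    (sb2 s02 : ℝ) (hsb : 0 < sb2) (hs0 : 0 < s02)
    (C : Multiset (Fin A × Fin A × ℝ)) (Rt : Multiset (Fin A × ℝ))
    (β β' : EuclideanSpace ℝ (Fin Dd)) (θ0 θ0' : ℝ) :
    scoraLoss x f g sb2 s02 C Rt ((2:ℝ)⁻¹ • (β + β')) ((θ0 + θ0') / 2)
      ≤ (scoraLoss x f g sb2 s02 C Rt β θ0 + scoraLoss x f g sb2 s02 C Rt β' θ0') / 2
        - ‖β - β'‖ ^ 2 / (8 * sb2) - (θ0 - θ0') ^ 2 / (8 * s02) := by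
  have hin : ∀ v : EuclideanSpace ℝ (Fin Dd),
      ⟪v, (2:ℝ)⁻¹ • (β + β')⟫ = (⟪v, β⟫ + ⟪v, β'⟫) / 2 := by
    intro v; rw [real_inner_smul_right, inner_add_right]; ring
  have hnorm : ‖(2:ℝ)⁻¹ • (β + β')‖ ^ 2
      = (‖β‖ ^ 2 + ‖β'‖ ^ 2) / 2 - ‖β - β'‖ ^ 2 / 4 := by
    have hp := parallelogram_law_with_norm ℝ β β'
    have : ‖(2:ℝ)⁻¹ • (β + β')‖ ^ 2 = (2:ℝ)⁻¹ ^ 2 * ‖β + β'‖ ^ 2 := by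
      rw [norm_smul]; simp [mul_pow]
    rw [this]; nlinarith [hp]
  have hC : (C.map (fun q =>
        cgfm f ⟪x q.1 - x q.2.1, (2:ℝ)⁻¹ • (β + β')⟫
          - q.2.2 * ⟪x q.1 - x q.2.1, (2:ℝ)⁻¹ • (β + β')⟫)).sum
      ≤ ((C.map (fun q => cgfm f ⟪x q.1 - x q.2.1, β⟫ - q.2.2 * ⟪x q.1 - x q.2.1, β⟫)).sum
        + (C.map (fun q => cgfm f ⟪x q.1 - x q.2.1, β'⟫ - q.2.2 * ⟪x q.1 - x q.2.1, β'⟫)).sum) / 2 := by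
    rw [← msum_avg]
    refine Multiset.sum_map_le_sum_map _ _ fun q _ => ?_
    rw [hin]
    have := cgfm_midpoint f hf ⟪x q.1 - x q.2.1, β⟫ ⟪x q.1 - x q.2.1, β'⟫
    nlinarith [this]
  have hR : (Rt.map (fun q =>
        cgfm g (⟪x q.1, (2:ℝ)⁻¹ • (β + β')⟫ - (θ0 + θ0') / 2)
          - q.2 * (⟪x q.1, (2:ℝ)⁻¹ • (β + β')⟫ - (θ0 + θ0') / 2))).sum
      ≤ ((Rt.map (fun q => cgfm g (⟪x q.1, β⟫ - θ0) - q.2 * (⟪x q.1, β⟫ - θ0))).sum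
        + (Rt.map (fun q => cgfm g (⟪x q.1, β'⟫ - θ0') - q.2 * (⟪x q.1, β'⟫ - θ0'))).sum) / 2 := by
    rw [← msum_avg]
    refine Multiset.sum_map_le_sum_map _ _ fun q _ => ?_
    rw [hin]
    have harg : (⟪x q.1, β⟫ + ⟪x q.1, β'⟫) / 2 - (θ0 + θ0') / 2
        = ((⟪x q.1, β⟫ - θ0) + (⟪x q.1, β'⟫ - θ0')) / 2 := by ring
    rw [harg]
    have := cgfm_midpoint g hg (⟪x q.1, β⟫ - θ0) (⟪x q.1, β'⟫ - θ0')
    nlinarith [this]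
  simp only [scoraLoss]
  rw [hnorm]
  have h8b : (0:ℝ) < 8 * sb2 := by linarith
  have h8s : (0:ℝ) < 8 * s02 := by linarith
  have hq : ((θ0 + θ0') / 2) ^ 2 / (2 * s02)
      = (θ0 ^ 2 / (2 * s02) + θ0' ^ 2 / (2 * s02)) / 2 - (θ0 - θ0') ^ 2 / (8 * s02) := by
    field_simp; ring
  have hn : ((‖β‖ ^ 2 + ‖β'‖ ^ 2) / 2 - ‖β - β'‖ ^ 2 / 4) / (2 * sb2)
      = (‖β‖ ^ 2 / (2 * sb2) + ‖β'‖ ^ 2 / (2 * sb2)) / 2 - ‖β - β'‖ ^ 2 / (8 * sb2) := by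
    field_simp; ring
  rw [hq, hn]
  linarith [hC, hR]

/-- pairwise monotonicity of the SCoRa MAP estimator for comparisons.
If two SCoRa datasets share the ratings `Rt` and the comparisons `C0`, except that one
comparison of the pair `(b, c)` has value `r` in the first and `r'` in the second with
`r ≥ r'`, then `θ_b*(D) − θ_c*(D) ≥ θ_b*(D') − θ_c*(D')` (where `θ_a* = x_aᵀ β*`). -/
theorem scora_pairwise_monotone_comparisons
    {Dd A : ℕ} (x : Fin A → EuclideanSpace ℝ (Fin Dd))
    (f g : Measure ℝ) [IsProbabilityMeasure f] [IsProbabilityMeasure g]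
    (hf : HasExpMoments f) (hg : HasExpMoments g)
    (sb2 s02 : ℝ) (hsb : 0 < sb2) (hs0 : 0 < s02)
    (C0 : Multiset (Fin A × Fin A × ℝ)) (Rt : Multiset (Fin A × ℝ))
    (b c : Fin A) (r r' : ℝ) (hrr : r ≥ r')
    (β β' : EuclideanSpace ℝ (Fin Dd)) (θ0 θ0' : ℝ)
    (hmin : ∀ (γ : EuclideanSpace ℝ (Fin Dd)) (t : ℝ),
      scoraLoss x f g sb2 s02 ((b, c, r) ::ₘ C0) Rt β θ0
        ≤ scoraLoss x f g sb2 s02 ((b, c, r) ::ₘ C0) Rt γ t)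
    (hmin' : ∀ (γ : EuclideanSpace ℝ (Fin Dd)) (t : ℝ),
      scoraLoss x f g sb2 s02 ((b, c, r') ::ₘ C0) Rt β' θ0'
        ≤ scoraLoss x f g sb2 s02 ((b, c, r') ::ₘ C0) Rt γ t) :
    ⟪x b, β⟫ - ⟪x c, β⟫ ≥ ⟪x b, β'⟫ - ⟪x c, β'⟫ := by
  have hsub : ∀ γ : EuclideanSpace ℝ (Fin Dd), ⟪x b - x c, γ⟫ = ⟪x b, γ⟫ - ⟪x c, γ⟫ :=
    fun γ => inner_sub_left _ _ _
  rcases eq_or_lt_of_le hrr with heq | hlt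
  · -- r = r' : same loss, use strict convexity to get β = β'
    subst heq
    have h12 := hmin β' θ0'
    have h21 := hmin' β θ0
    have hEq : scoraLoss x f g sb2 s02 ((b, c, r') ::ₘ C0) Rt β θ0
        = scoraLoss x f g sb2 s02 ((b, c, r') ::ₘ C0) Rt β' θ0' := le_antisymm h12 h21
    have hmid := hmin ((2:ℝ)⁻¹ • (β + β')) ((θ0 + θ0') / 2)
    have hconv := scoraLoss_midpoint x f g hf hg sb2 s02 hsb hs0
      ((b, c, r') ::ₘ C0) Rt β β' θ0 θ0'
    have h8b : (0:ℝ) < 8 * sb2 := by linarith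
    have h8s : (0:ℝ) < 8 * s02 := by linarith
    have h3 : ‖β - β'‖ ^ 2 / (8 * sb2) ≤ 0 := by
      linarith [div_nonneg (sq_nonneg (θ0 - θ0')) h8s.le]
    have hnn : ‖β - β'‖ ^ 2 ≤ 0 := by
      rcases div_nonpos_iff.mp h3 with ⟨h1, h2⟩ | ⟨h1, h2⟩
      · linarith
      · exact h1
    have hββ' : β = β' := by
      have : ‖β - β'‖ = 0 := by nlinarith [norm_nonneg (β - β')]
      have := norm_eq_zero.mp this
      exact sub_eq_zero.mp this
    rw [hββ']
  · -- r' < r : exchange argument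
    have h12 := hmin β' θ0'
    have h21 := hmin' β θ0
    rw [scoraLoss_cons, scoraLoss_cons] at h12 h21
    have key : (r - r') * (⟪x b - x c, β⟫ - ⟪x b - x c, β'⟫) ≥ 0 := by nlinarith
    have hs : ⟪x b - x c, β'⟫ ≤ ⟪x b - x c, β⟫ := by nlinarith
    rw [hsub, hsub] at hs
    exact hs

end
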